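/- In a plane-oriented recursive tree on n nodes, for a fixed node label j with 2 ≤ j ≤ n, the probability that the degree of node j equals 1 is Γ(n-1)Γ(j-1/2) / (Γ(n-1/2)Γ(j-1)). -/
import Mathlib


/-- In a PORT, node `j` (for `2 ≤ j ≤ n`) has degree 1 at time `n` iff it is never
chosen as a parent from time `j+1` through `n`. `p m` denotes the probability that
`D_{m,j} = 1`; it satisfies `p j = 1` and, since node `j` (of degree 1) is chosen at
time `m` with probability `1/(2m-3)`, `p m = p (m-1) * (2m-4)/(2m-3)` for `m > j`.
The closed form is `Γ(n-1)Γ(j-1/2)/(Γ(n-1/2)Γ(j-1))`. -/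
theorem port_prob_degree_one (j n : ℕ) (hj : 2 ≤ j) (hjn : j ≤ n)
    (p : ℕ → ℝ) (hinit : p j = 1)
    (hrec : ∀ m : ℕ, j < m → p m = p (m - 1) * (2 * (m : ℝ) - 4) / (2 * (m : ℝ) - 3)) :
    p n = Real.Gamma ((n : ℝ) - 1) * Real.Gamma ((j : ℝ) - 1 / 2) /
      (Real.Gamma ((n : ℝ) - 1 / 2) * Real.Gamma ((j : ℝ) - 1)) := by
  induction n with
  | zero => omega
  | succ n ih =>
    rcases eq_or_lt_of_le hjn with heq | hlt
    · rw [← heq, hinit]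
      have hj2 : (2:ℝ) ≤ (j:ℝ) := by exact_mod_cast hj
      have g1 : Real.Gamma ((j:ℝ) - 1) ≠ 0 := ne_of_gt (Real.Gamma_pos_of_pos (by linarith))
      have g2 : Real.Gamma ((j:ℝ) - 1/2) ≠ 0 := ne_of_gt (Real.Gamma_pos_of_pos (by linarith))
      rw [mul_comm (Real.Gamma ((j:ℝ) - 1/2))]
      exact (div_self (mul_ne_zero g1 g2)).symm
    · have hjn' : j ≤ n := by omega
      have hn2 : (2:ℝ) ≤ (n:ℝ) := by
        have : 2 ≤ n := by omega
        exact_mod_cast this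
      have hrec' := hrec (n + 1) (by omega)
      simp only [Nat.add_sub_cancel] at hrec'
      rw [hrec', ih hjn']
      -- Gamma recurrences
      have hG1 : Real.Gamma ((↑(n+1):ℝ) - 1) = ((n:ℝ) - 1) * Real.Gamma ((n:ℝ) - 1) := by
        have := Real.Gamma_add_one (s := (n:ℝ) - 1) (by intro h; rw [sub_eq_zero] at h; norm_num at h; linarith)
        push_cast
        rw [show (n:ℝ) + 1 - 1 = ((n:ℝ) - 1) + 1 by ring, this]
      have hG2 : Real.Gamma ((↑(n+1):ℝ) - 1/2) = ((n:ℝ) - 1/2) * Real.Gamma ((n:ℝ) - 1/2) := by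
        have := Real.Gamma_add_one (s := (n:ℝ) - 1/2) (by intro h; rw [sub_eq_zero] at h; norm_num at h; linarith)
        push_cast
        rw [show (n:ℝ) + 1 - 1/2 = ((n:ℝ) - 1/2) + 1 by ring, this]
      rw [hG1, hG2]
      have g1 : Real.Gamma ((n:ℝ) - 1) ≠ 0 := by
        rcases eq_or_lt_of_le hn2 with h2 | h2
        · rw [show (n:ℝ) - 1 = 1 by linarith, Real.Gamma_one]; norm_num
        · exact ne_of_gt (Real.Gamma_pos_of_pos (by linarith))
      have g2 : Real.Gamma ((n:ℝ) - 1/2) ≠ 0 := ne_of_gt (Real.Gamma_pos_of_pos (by linarith))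
      have g3 : ((n:ℝ) - 1/2) ≠ 0 := by linarith
      have gj1 : Real.Gamma ((j:ℝ) - 1/2) ≠ 0 := by
        have : (2:ℝ) ≤ (j:ℝ) := by exact_mod_cast hj
        exact ne_of_gt (Real.Gamma_pos_of_pos (by linarith))
      have gj2 : Real.Gamma ((j:ℝ) - 1) ≠ 0 := by
        have h2 : (2:ℝ) ≤ (j:ℝ) := by exact_mod_cast hj
        rcases eq_or_lt_of_le h2 with h | h
        · rw [show (j:ℝ) - 1 = 1 by linarith, Real.Gamma_one]; norm_num
        · exact ne_of_gt (Real.Gamma_pos_of_pos (by linarith))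
      have hcast : ((n:ℝ) + 1) = ((↑(n+1):ℝ)) := by push_cast; ring
      push_cast
      field_simp
      ring
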